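/- Let n, k, ℓ be natural numbers with ℓ ≤ n − k ≤ n, and let H be an (n−k) × n matrix over F₂ = ZMod 2 such that the (n−k) × (n−k−ℓ) submatrix formed by the last n−k−ℓ columns of H has rank n−k−ℓ. Then there exist an invertible (n−k) × (n−k) matrix U over F₂, an ℓ × (k+ℓ) matrix H′ and an (n−k−ℓ) × (k+ℓ) matrix H″ over F₂ such that U·H is the block matrix whose first ℓ rows are (H′ | 0_{ℓ × (n−k−ℓ)}) and whose last n−k−ℓ rows are (H″ | I_{n−k−ℓ}). -/

import Mathlib

open Matrix

private lemma exists_basis_extend {F : Type*} [Field F] {m r l : ℕ} (hm : m = l + r)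
    (v : Fin r → (Fin m → F)) (hli : LinearIndependent F v) :
    ∃ b : Module.Basis (Fin l ⊕ Fin r) F (Fin m → F), ∀ j, b (Sum.inr j) = v j := by
  classical
  set W := Submodule.span F (Set.range v) with hW
  obtain ⟨W', hW'⟩ := W.exists_isCompl
  have hfW : Module.finrank F W = r := by
    rw [hW, finrank_span_eq_card hli, Fintype.card_fin]
  have h1 := Submodule.finrank_add_eq_of_isCompl hW'
  have h2 : Module.finrank F (Fin m → F) = m := by simp
  have hfW' : Module.finrank F W' = l := by omega
  let bW : Module.Basis (Fin r) F W := Module.Basis.span hli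
  let bW' : Module.Basis (Fin l) F W' := Module.finBasisOfFinrankEq F W' hfW'
  refine ⟨(bW'.prod bW).map (Submodule.prodEquivOfIsCompl W' W hW'.symm), fun j => ?_⟩
  simp [Module.Basis.map_apply, Module.Basis.prod_apply, Submodule.coe_prodEquivOfIsCompl',
    bW]
  exact congrArg Subtype.val (Module.Basis.span_apply hli j)


/-- If the last `n-k-ℓ` columns of the `(n-k) × n` parity-check matrix `H` over `F₂` form a
matrix of full rank `n-k-ℓ`, then there is an invertible matrix `U` and matrices `H′`, `H″`
such that `U·H` is the block matrix with first `ℓ` rows `(H′ | 0)` and last `n-k-ℓ` rows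
`(H″ | I)`. -/
theorem stmt9 (n k ℓ : ℕ) (hk : k ≤ n) (hℓ : ℓ ≤ n - k)
    (H : Matrix (Fin (n - k)) (Fin n) (ZMod 2))
    (hrank : (H.submatrix id fun j : Fin (n - k - ℓ) =>
        (⟨k + ℓ + (j : ℕ), by omega⟩ : Fin n)).rank = n - k - ℓ) :
    ∃ (U : Matrix (Fin (n - k)) (Fin (n - k)) (ZMod 2))
      (H' : Matrix (Fin ℓ) (Fin (k + ℓ)) (ZMod 2))
      (H'' : Matrix (Fin (n - k - ℓ)) (Fin (k + ℓ)) (ZMod 2)),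
      IsUnit U ∧
      U * H = (Matrix.fromBlocks H' 0 H''
          (1 : Matrix (Fin (n - k - ℓ)) (Fin (n - k - ℓ)) (ZMod 2))).submatrix
        (fun i : Fin (n - k) =>
          finSumFinEquiv.symm (Fin.cast (by omega : n - k = ℓ + (n - k - ℓ)) i))
        (fun j : Fin n =>
          finSumFinEquiv.symm (Fin.cast (by omega : n = (k + ℓ) + (n - k - ℓ)) j)) := by
  classical
  have hmr : n - k = ℓ + (n - k - ℓ) := by omega
  set B : Matrix (Fin (n - k)) (Fin (n - k - ℓ)) (ZMod 2) :=
    H.submatrix id (fun j : Fin (n - k - ℓ) => (⟨k + ℓ + (j : ℕ), by omega⟩ : Fin n))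
    with hBdef
  have hrankB : B.rank = n - k - ℓ := hrank
  have hli : LinearIndependent (ZMod 2) (fun j => Bᵀ j) := by
    rw [linearIndependent_iff_card_eq_finrank_span, Fintype.card_fin]
    show _ = Module.finrank (ZMod 2) (Submodule.span (ZMod 2) _)
    rw [show Set.range (fun j => Bᵀ j) = Set.range B.col from rfl,
      ← Matrix.rank_eq_finrank_span_cols, hrankB]
  obtain ⟨b, hb⟩ := exists_basis_extend hmr (fun j => Bᵀ j) hli
  set M : Matrix (Fin (n - k)) (Fin (n - k)) (ZMod 2) :=
    Matrix.of (fun i t => b (finSumFinEquiv.symm (Fin.cast hmr t)) i) with hMdef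
  have hM : M = (Pi.basisFun (ZMod 2) (Fin (n - k))).toMatrix
      ⇑(b.reindex (finSumFinEquiv.trans (finCongr hmr.symm))) := by
    ext i t
    simp [hMdef, Module.Basis.toMatrix_apply, Module.Basis.reindex_apply]
  letI hMinv : Invertible M :=
    hM ▸ Module.Basis.invertibleToMatrix (Pi.basisFun (ZMod 2) (Fin (n - k)))
      (b.reindex (finSumFinEquiv.trans (finCongr hmr.symm)))
  set U : Matrix (Fin (n - k)) (Fin (n - k)) (ZMod 2) := ⅟M with hUdef
  have hUM : U * M = 1 := invOf_mul_self M
  have hB2 : B = M.submatrix id (fun c => Fin.cast hmr.symm (Fin.natAdd ℓ c)) := by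
    ext t c
    have : Fin.cast hmr (Fin.cast hmr.symm (Fin.natAdd ℓ c)) = Fin.natAdd ℓ c := rfl
    simp only [Matrix.submatrix_apply, id, hMdef, Matrix.of_apply, this,
      finSumFinEquiv_symm_apply_natAdd, hb]
    rfl
  refine ⟨U, Matrix.of (fun a c => (U * H) (Fin.castLE (by omega) a) (Fin.castLE (by omega) c)),
    Matrix.of (fun a c => (U * H) ⟨ℓ + (a : ℕ), by have := a.isLt; omega⟩
      (Fin.castLE (by omega) c)), ⟨⟨U, M, hUM, mul_invOf_self M⟩, rfl⟩, ?_⟩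
  ext i j
  rw [Matrix.submatrix_apply]
  rcases lt_or_ge (j : ℕ) (k + ℓ) with hj | hj
  · have hjrw : ∀ (p : n = (k + ℓ) + (n - k - ℓ)),
        finSumFinEquiv.symm (Fin.cast p j) = Sum.inl ⟨j, hj⟩ := by
      intro p
      rw [show Fin.cast p j = Fin.castAdd _ ⟨(j : ℕ), hj⟩ from Fin.ext rfl,
        finSumFinEquiv_symm_apply_castAdd]
    rw [hjrw]
    rcases lt_or_ge (i : ℕ) ℓ with hi | hi
    · have hirw : ∀ (p : n - k = ℓ + (n - k - ℓ)),
          finSumFinEquiv.symm (Fin.cast p i) = Sum.inl ⟨i, hi⟩ := by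
        intro p
        rw [show Fin.cast p i = Fin.castAdd _ ⟨(i : ℕ), hi⟩ from Fin.ext rfl,
          finSumFinEquiv_symm_apply_castAdd]
      rw [hirw, Matrix.fromBlocks_apply₁₁, Matrix.of_apply]
      congr 1
    · have hirw : ∀ (p : n - k = ℓ + (n - k - ℓ)),
          finSumFinEquiv.symm (Fin.cast p i) = Sum.inr ⟨(i : ℕ) - ℓ, by have := i.isLt; omega⟩ := by
        intro p
        rw [show Fin.cast p i = Fin.natAdd ℓ ⟨(i : ℕ) - ℓ, by have := i.isLt; omega⟩ from
          Fin.ext (by simp; omega), finSumFinEquiv_symm_apply_natAdd]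
      rw [hirw, Matrix.fromBlocks_apply₂₁, Matrix.of_apply,
        show (Fin.castLE (by omega : k + ℓ ≤ n) (⟨(j : ℕ), hj⟩ : Fin (k + ℓ))) = j from
          Fin.ext rfl,
        show (⟨ℓ + ((i : ℕ) - ℓ), by have := i.isLt; omega⟩ : Fin (n - k)) = i from
          Fin.ext (by simp; omega)]
  · have hjn := j.isLt
    obtain ⟨c, hc⟩ : ∃ c : Fin (n - k - ℓ), (j : ℕ) = k + ℓ + (c : ℕ) :=
      ⟨⟨(j : ℕ) - (k + ℓ), by omega⟩, by simp; omega⟩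
    have hjrw : ∀ (p : n = (k + ℓ) + (n - k - ℓ)),
        finSumFinEquiv.symm (Fin.cast p j) = Sum.inr c := by
      intro p
      rw [show Fin.cast p j = Fin.natAdd (k + ℓ) c from Fin.ext (by simpa using hc),
        finSumFinEquiv_symm_apply_natAdd]
    rw [hjrw]
    have hHj : ∀ t, H t j = B t c := by
      intro t
      rw [show j = (⟨k + ℓ + (c : ℕ), by have := c.isLt; omega⟩ : Fin n) from Fin.ext hc]
      simp [hBdef]
    have hLHS : (U * H) i j = if i = Fin.cast hmr.symm (Fin.natAdd ℓ c) then 1 else 0 := by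
      calc (U * H) i j = ∑ t, U i t * B t c := by
            rw [Matrix.mul_apply]; exact Finset.sum_congr rfl fun t _ => by rw [hHj]
        _ = (U * M) i (Fin.cast hmr.symm (Fin.natAdd ℓ c)) := by
            rw [Matrix.mul_apply]
            exact Finset.sum_congr rfl fun t _ => by rw [hB2]; rfl
        _ = _ := by rw [hUM, Matrix.one_apply]
    rw [hLHS]
    rcases lt_or_ge (i : ℕ) ℓ with hi | hi
    · have hirw : ∀ (p : n - k = ℓ + (n - k - ℓ)),
          finSumFinEquiv.symm (Fin.cast p i) = Sum.inl ⟨i, hi⟩ := by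
        intro p
        rw [show Fin.cast p i = Fin.castAdd _ ⟨(i : ℕ), hi⟩ from Fin.ext rfl,
          finSumFinEquiv_symm_apply_castAdd]
      rw [hirw, Matrix.fromBlocks_apply₁₂]
      rw [if_neg]
      · rfl
      · intro h
        have := congrArg Fin.val h
        simp at this
        omega
    · have hirw : ∀ (p : n - k = ℓ + (n - k - ℓ)),
          finSumFinEquiv.symm (Fin.cast p i) = Sum.inr ⟨(i : ℕ) - ℓ, by have := i.isLt; omega⟩ := by
        intro p
        rw [show Fin.cast p i = Fin.natAdd ℓ ⟨(i : ℕ) - ℓ, by have := i.isLt; omega⟩ from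
          Fin.ext (by simp; omega), finSumFinEquiv_symm_apply_natAdd]
      rw [hirw, Matrix.fromBlocks_apply₂₂, Matrix.one_apply]
      split_ifs with h1 h2 h2
      · rfl
      · exact absurd (Fin.ext (by have := congrArg Fin.val h1; simp at this ⊢; omega)) h2
      · exact absurd (Fin.ext (by have := congrArg Fin.val h2; simp at this ⊢; omega)) h1
      · rfl
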